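/- (Lemma 'Laplacian1'.) Let U ⊆ ℝ^{2m} ≅ ℂ^m be open, let M : U → so(m,ℂ) be a C¹ map into the skew-symmetric complex m×m matrices, and let φ : U → ℂ^k be a C² map that is M-holomorphic. Then, componentwise on U, (1/4)Δφ = − Σ_{i,j=1}^m (∂M^i_{j̄}/∂q^j) · (∂φ/∂q^i). -/

import Mathlib

open Complex BigOperators Matrix

/-- Partial derivative in the direction of the real coordinate `x^{2j-1}`,
identifying `ℝ^{2m} ≅ ℂ^m` via `q^j = x^{2j-1} + i x^{2j}`. -/
noncomputable def pdRe {m : ℕ} (f : (Fin m → ℂ) → ℂ) (j : Fin m) (x : Fin m → ℂ) : ℂ :=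
  fderiv ℝ f x (Pi.single j 1)

/-- Partial derivative in the direction of the real coordinate `x^{2j}`. -/
noncomputable def pdIm {m : ℕ} (f : (Fin m → ℂ) → ℂ) (j : Fin m) (x : Fin m → ℂ) : ℂ :=
  fderiv ℝ f x (Pi.single j Complex.I)

/-- Wirtinger derivative `∂f/∂q^j = ½(∂f/∂x^{2j-1} − i ∂f/∂x^{2j})`. -/
noncomputable def wdq {m : ℕ} (f : (Fin m → ℂ) → ℂ) (j : Fin m) (x : Fin m → ℂ) : ℂ :=
  (pdRe f j x - Complex.I * pdIm f j x) / 2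

/-- Wirtinger derivative `∂f/∂q̄^j = ½(∂f/∂x^{2j-1} + i ∂f/∂x^{2j})`. -/
noncomputable def wdqbar {m : ℕ} (f : (Fin m → ℂ) → ℂ) (j : Fin m) (x : Fin m → ℂ) : ℂ :=
  (pdRe f j x + Complex.I * pdIm f j x) / 2

/-- Laplacian `Δf = Σ_{i=1}^{2m} ∂²f/(∂x^i)²`. -/
noncomputable def lap {m : ℕ} (f : (Fin m → ℂ) → ℂ) (x : Fin m → ℂ) : ℂ :=
  ∑ j, (pdRe (fun y => pdRe f j y) j x + pdIm (fun y => pdIm f j y) j x)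

/-- The horizontal weak conformality quantity `Σ_{i=1}^{2m} (∂f/∂x^i)²`. -/
noncomputable def hwc {m : ℕ} (f : (Fin m → ℂ) → ℂ) (x : Fin m → ℂ) : ℂ :=
  ∑ j, ((pdRe f j x) ^ 2 + (pdIm f j x) ^ 2)


noncomputable def pd {m : ℕ} (v : Fin m → ℂ) (f : (Fin m → ℂ) → ℂ) (x : Fin m → ℂ) : ℂ :=
  fderiv ℝ f x v

section lemmas
variable {m : ℕ} {f g a b : (Fin m → ℂ) → ℂ} {q : Fin m → ℂ} {v w : Fin m → ℂ}

lemma diffAt_pd (hf : ContDiffAt ℝ 2 f q) (v : Fin m → ℂ) :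
    DifferentiableAt ℝ (pd v f) q := by
  have hd : ContDiffAt ℝ 1 (fderiv ℝ f) q := hf.fderiv_right (by norm_num)
  have : DifferentiableAt ℝ (fderiv ℝ f) q := hd.differentiableAt one_ne_zero
  exact (ContinuousLinearMap.apply ℝ ℂ v).differentiableAt.comp q this

lemma pd_pd (hf : ContDiffAt ℝ 2 f q) (v w : Fin m → ℂ) :
    pd v (pd w f) q = fderiv ℝ (fderiv ℝ f) q v w := by
  have hd : DifferentiableAt ℝ (fderiv ℝ f) q :=
    (hf.fderiv_right (m := 1) (by norm_num)).differentiableAt one_ne_zero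
  have : fderiv ℝ (fun y => fderiv ℝ f y w) q
      = (fderiv ℝ f q).comp (fderiv ℝ (fun _ : Fin m → ℂ => w) q)
        + (fderiv ℝ (fderiv ℝ f) q).flip w :=
    fderiv_clm_apply hd (differentiableAt_const w)
  show fderiv ℝ (fun y => fderiv ℝ f y w) q v = _
  rw [this]
  simp

lemma pd_comm (hf : ContDiffAt ℝ 2 f q) (v w : Fin m → ℂ) :
    pd v (pd w f) q = pd w (pd v f) q := by
  rw [pd_pd hf, pd_pd hf]
  exact (hf.isSymmSndFDerivAt (by norm_num)).eq v w

lemma pd_congr (h : f =ᶠ[nhds q] g) : pd v f q = pd v g q := by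
  simp only [pd, h.fderiv_eq]

lemma pd_neg (hf : DifferentiableAt ℝ f q) : pd v (fun x => -f x) q = -pd v f q := by
  simp only [pd]
  rw [fderiv_fun_neg]
  simp

lemma pd_sum {ι : Type*} (s : Finset ι) (F : ι → (Fin m → ℂ) → ℂ)
    (hF : ∀ i ∈ s, DifferentiableAt ℝ (F i) q) :
    pd v (fun x => ∑ i ∈ s, F i x) q = ∑ i ∈ s, pd v (F i) q := by
  simp only [pd]
  rw [fderiv_fun_sum hF]
  simp

lemma pd_mul (ha : DifferentiableAt ℝ a q) (hb : DifferentiableAt ℝ b q) :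
    pd v (fun x => a x * b x) q = pd v a q * b q + a q * pd v b q := by
  simp only [pd]
  rw [fderiv_fun_mul ha hb]
  simp [smul_eq_mul]
  ring

end lemmas

section wlemmas
variable {m : ℕ} {f g a b : (Fin m → ℂ) → ℂ} {q : Fin m → ℂ} {v : Fin m → ℂ} {i j : Fin m}

lemma pd_comb (c₁ c₂ : ℂ) (ha : DifferentiableAt ℝ a q) (hb : DifferentiableAt ℝ b q) :
    pd v (fun x => c₁ * a x + c₂ * b x) q = c₁ * pd v a q + c₂ * pd v b q := by
  simp only [pd]
  rw [fderiv_fun_add (ha.const_mul c₁) (hb.const_mul c₂), fderiv_const_mul ha, fderiv_const_mul hb]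
  simp [smul_eq_mul]

lemma wdq_eq_pd : wdq f j q
    = (1/2 : ℂ) * pd (Pi.single j 1) f q + (-Complex.I/2) * pd (Pi.single j Complex.I) f q := by
  simp [wdq, pdRe, pdIm, pd]; ring

lemma wdqbar_eq_pd : wdqbar f j q
    = (1/2 : ℂ) * pd (Pi.single j 1) f q + (Complex.I/2) * pd (Pi.single j Complex.I) f q := by
  simp [wdqbar, pdRe, pdIm, pd]; ring

lemma wdq_fun_eq : wdq f j
    = fun x => (1/2 : ℂ) * pd (Pi.single j 1) f x + (-Complex.I/2) * pd (Pi.single j Complex.I) f x := by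
  funext x; exact wdq_eq_pd

lemma wdqbar_fun_eq : wdqbar f j
    = fun x => (1/2 : ℂ) * pd (Pi.single j 1) f x + (Complex.I/2) * pd (Pi.single j Complex.I) f x := by
  funext x; exact wdqbar_eq_pd

lemma diffAt_wdq (hf : ContDiffAt ℝ 2 f q) : DifferentiableAt ℝ (wdq f j) q := by
  rw [wdq_fun_eq]
  exact ((diffAt_pd hf _).const_mul _).add ((diffAt_pd hf _).const_mul _)

lemma pd_wdq (hf : ContDiffAt ℝ 2 f q) :
    pd v (wdq f j) q = (1/2 : ℂ) * pd v (pd (Pi.single j 1) f) q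
      + (-Complex.I/2) * pd v (pd (Pi.single j Complex.I) f) q := by
  rw [wdq_fun_eq]
  exact pd_comb _ _ (diffAt_pd hf _) (diffAt_pd hf _)

lemma pd_wdqbar (hf : ContDiffAt ℝ 2 f q) :
    pd v (wdqbar f j) q = (1/2 : ℂ) * pd v (pd (Pi.single j 1) f) q
      + (Complex.I/2) * pd v (pd (Pi.single j Complex.I) f) q := by
  rw [wdqbar_fun_eq]
  exact pd_comb _ _ (diffAt_pd hf _) (diffAt_pd hf _)

lemma wdq_comm (hf : ContDiffAt ℝ 2 f q) : wdq (wdq f j) i q = wdq (wdq f i) j q := by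
  rw [wdq_eq_pd (f := wdq f j), wdq_eq_pd (f := wdq f i),
    pd_wdq hf, pd_wdq hf, pd_wdq hf, pd_wdq hf,
    pd_comm hf (Pi.single i 1) (Pi.single j 1),
    pd_comm hf (Pi.single i 1) (Pi.single j Complex.I),
    pd_comm hf (Pi.single i Complex.I) (Pi.single j 1),
    pd_comm hf (Pi.single i Complex.I) (Pi.single j Complex.I)]
  ring

lemma quarter_lap (hf : ContDiffAt ℝ 2 f q) :
    pdRe (fun y => pdRe f j y) j q + pdIm (fun y => pdIm f j y) j q
      = 4 * wdq (wdqbar f j) j q := by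
  have h1 : pdRe (fun y => pdRe f j y) j q = pd (Pi.single j 1) (pd (Pi.single j 1) f) q := rfl
  have h2 : pdIm (fun y => pdIm f j y) j q
      = pd (Pi.single j Complex.I) (pd (Pi.single j Complex.I) f) q := rfl
  rw [h1, h2, wdq_eq_pd (f := wdqbar f j), pd_wdqbar hf, pd_wdqbar hf,
    pd_comm hf (Pi.single j 1) (Pi.single j Complex.I)]
  ring_nf
  simp [Complex.I_sq]

lemma wdq_congr (h : f =ᶠ[nhds q] g) : wdq f j q = wdq g j q := by
  simp only [wdq, pdRe, pdIm, h.fderiv_eq]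

lemma wdq_neg (hf : DifferentiableAt ℝ f q) : wdq (fun x => -f x) j q = -wdq f j q := by
  simp only [wdq, pdRe, pdIm]
  rw [fderiv_fun_neg]
  simp; ring

lemma wdq_sum {ι : Type*} (s : Finset ι) (F : ι → (Fin m → ℂ) → ℂ)
    (hF : ∀ i ∈ s, DifferentiableAt ℝ (F i) q) :
    wdq (fun x => ∑ i ∈ s, F i x) j q = ∑ i ∈ s, wdq (F i) j q := by
  simp only [wdq, pdRe, pdIm]
  rw [fderiv_fun_sum hF]
  simp only [ContinuousLinearMap.coe_sum', Finset.sum_apply, Finset.mul_sum]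
  rw [← Finset.sum_sub_distrib, ← Finset.sum_div]

lemma wdq_mul (ha : DifferentiableAt ℝ a q) (hb : DifferentiableAt ℝ b q) :
    wdq (fun x => a x * b x) j q = wdq a j q * b q + a q * wdq b j q := by
  simp only [wdq, pdRe, pdIm]
  rw [fderiv_fun_mul ha hb]
  simp [smul_eq_mul]
  ring

end wlemmas

/-- Lemma `Laplacian1`: if `φ : U → ℂ^k` is `M`-holomorphic, with `M` a
`C¹` map into the skew-symmetric complex `m×m` matrices, then componentwise
`(1/4)Δφ = − Σ_{i,j} (∂M^i_{j̄}/∂q^j)(∂φ/∂q^i)`. -/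
theorem laplacian_of_Mholomorphic {m k : ℕ} (U : Set (Fin m → ℂ)) (hU : IsOpen U)
    (M : (Fin m → ℂ) → Matrix (Fin m) (Fin m) ℂ)
    (hskew : ∀ q ∈ U, (M q)ᵀ = -(M q))
    (hM : ∀ i j, ContDiffOn ℝ 1 (fun q => M q i j) U)
    (φ : (Fin m → ℂ) → Fin k → ℂ)
    (hφ : ∀ a, ContDiffOn ℝ 2 (fun q => φ q a) U)
    (hhol : ∀ q ∈ U, ∀ i, ∀ a,
      wdqbar (fun x => φ x a) i q + ∑ j, M q j i * wdq (fun x => φ x a) j q = 0) :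
    ∀ q ∈ U, ∀ a, (1/4 : ℂ) * lap (fun x => φ x a) q
      = - ∑ i, ∑ j, wdq (fun x => M x i j) j q * wdq (fun x => φ x a) i q := by
  intro q hq a
  set f : (Fin m → ℂ) → ℂ := fun x => φ x a with hf_def
  have hfq : ContDiffAt ℝ 2 f q := (hφ a).contDiffAt (hU.mem_nhds hq)
  have hMd : ∀ i j, DifferentiableAt ℝ (fun x => M x i j) q := fun i j =>
    ((hM i j).contDiffAt (hU.mem_nhds hq)).differentiableAt one_ne_zero
  have hterm : ∀ i, wdq (wdqbar f i) i q
      = - ∑ j, (wdq (fun x => M x j i) i q * wdq f j q + M q j i * wdq (wdq f j) i q) := by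
    intro i
    have hev : wdqbar f i =ᶠ[nhds q] fun x => -∑ j, M x j i * wdq f j x := by
      filter_upwards [hU.mem_nhds hq] with x hx
      exact eq_neg_of_add_eq_zero_left (hhol x hx i a)
    have hd : ∀ j : Fin m, DifferentiableAt ℝ (fun x => M x j i * wdq f j x) q := by
      intro j
      exact (hMd j i).mul (diffAt_wdq hfq)
    have hsumd : DifferentiableAt ℝ (fun x => ∑ j, M x j i * wdq f j x) q :=
      DifferentiableAt.fun_sum fun j _ => hd j
    rw [wdq_congr hev, wdq_neg hsumd, wdq_sum Finset.univ _ (fun j _ => hd j)]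
    congr 1
    refine Finset.sum_congr rfl fun j _ => ?_
    exact wdq_mul (hMd j i) (diffAt_wdq hfq)
  have hlap : (1/4 : ℂ) * lap f q = ∑ i, wdq (wdqbar f i) i q := by
    rw [lap, Finset.mul_sum]
    refine Finset.sum_congr rfl fun i _ => ?_
    rw [quarter_lap hfq]; ring
  have hzero : ∑ i, ∑ j, M q j i * wdq (wdq f j) i q = 0 := by
    have hMs : ∀ i j : Fin m, M q j i = - M q i j := by
      intro i j
      have := congrFun (congrFun (hskew q hq) i) j
      simpa using this
    have h1 : ∀ i j : Fin m, M q j i * wdq (wdq f j) i q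
        = -(M q i j * wdq (wdq f i) j q) := by
      intro i j; rw [hMs i j, wdq_comm hfq]; ring
    have h2 : (∑ i, ∑ j, M q j i * wdq (wdq f j) i q)
        = - ∑ i, ∑ j, M q i j * wdq (wdq f i) j q := by
      rw [← Finset.sum_neg_distrib]
      refine Finset.sum_congr rfl fun i _ => ?_
      rw [← Finset.sum_neg_distrib]
      exact Finset.sum_congr rfl fun j _ => h1 i j
    rw [Finset.sum_comm (f := fun i j => M q i j * wdq (wdq f i) j q)] at h2
    linear_combination h2 / 2
  calc (1/4 : ℂ) * lap f q = ∑ i, wdq (wdqbar f i) i q := hlap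
    _ = ∑ i, -((∑ j, wdq (fun x => M x j i) i q * wdq f j q)
          + ∑ j, M q j i * wdq (wdq f j) i q) := by
        refine Finset.sum_congr rfl fun i _ => ?_
        rw [hterm i, Finset.sum_add_distrib]
    _ = -((∑ i, ∑ j, wdq (fun x => M x j i) i q * wdq f j q)
          + ∑ i, ∑ j, M q j i * wdq (wdq f j) i q) := by
        rw [← Finset.sum_add_distrib, Finset.sum_neg_distrib]
    _ = - ∑ i, ∑ j, wdq (fun x => M x j i) i q * wdq f j q := by rw [hzero, add_zero]
    _ = - ∑ i, ∑ j, wdq (fun x => M x i j) j q * wdq f i q := by rw [Finset.sum_comm]
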